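/- Let X be a geodesic metric space, p ∈ X, and γ : [0,T] → X a continuous (λ, ε)-quasi-geodesic. Let γ(t) be a point on γ closest to p, and let α be a geodesic from p to γ(t). Then the concatenation α · γ|[t,T] is a continuous (3λ, ε)-quasi-geodesic. -/
import Mathlib


open Set Metric

universe u

/-- `γ` restricted to `I` is a `(lam, eps)`-quasi-geodesic. -/
def IsQuasiGeodesicOn {X : Type*} [MetricSpace X] (γ : ℝ → X) (I : Set ℝ)
    (lam eps : ℝ) : Prop :=
  ∀ s ∈ I, ∀ t ∈ I,
    (1 / lam) * |s - t| - eps ≤ dist (γ s) (γ t) ∧ dist (γ s) (γ t) ≤ lam * |s - t| + eps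

/-- `γ` restricted to `I` is a (unit-speed) geodesic. -/
def IsGeodesicOn {X : Type*} [MetricSpace X] (γ : ℝ → X) (I : Set ℝ) : Prop :=
  ∀ s ∈ I, ∀ t ∈ I, dist (γ s) (γ t) = |s - t|

/-- A metric space is geodesic if any two points are joined by a geodesic. -/
def GeodesicSpace (X : Type*) [MetricSpace X] : Prop :=
  ∀ x y : X, ∃ γ : ℝ → X, γ 0 = x ∧ γ (dist x y) = y ∧ IsGeodesicOn γ (Icc 0 (dist x y))

/-- A Morse gauge: an increasing map `ℝ≥1 × ℝ≥0 → ℝ≥0`, continuous in the second argument. -/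
def IsMorseGauge (M : ℝ → ℝ → ℝ) : Prop :=
  (∀ l e, 1 ≤ l → 0 ≤ e → 0 ≤ M l e) ∧
  (∀ l l' e e', 1 ≤ l → 0 ≤ e → l ≤ l' → e ≤ e' → M l e ≤ M l' e') ∧
  (∀ l, 1 ≤ l → ContinuousOn (fun e => M l e) (Ici 0))

/-- Pointwise partial order on Morse gauges (on the domain `ℝ≥1 × ℝ≥0`). -/
def GaugeLE (M N : ℝ → ℝ → ℝ) : Prop :=
  ∀ l e, 1 ≤ l → 0 ≤ e → M l e ≤ N l e

/-- `γ` restricted to `I` is `M`-Morse: every continuous `(lam, eps)`-quasi-geodesic with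
endpoints on `γ` lies in the closed `M lam eps`-neighbourhood of `γ`. -/
def IsMorseWith {X : Type*} [MetricSpace X] (M : ℝ → ℝ → ℝ) (γ : ℝ → X) (I : Set ℝ) : Prop :=
  ∀ lam eps : ℝ, 1 ≤ lam → 0 ≤ eps →
    ∀ (η : ℝ → X) (a b : ℝ), a ≤ b →
      ContinuousOn η (Icc a b) → IsQuasiGeodesicOn η (Icc a b) lam eps →
      η a ∈ γ '' I → η b ∈ γ '' I →
      ∀ t ∈ Icc a b, ∃ s ∈ I, dist (η t) (γ s) ≤ M lam eps

/-- The constant `δ_M` associated to a Morse gauge `M`. -/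
def morseDelta (M : ℝ → ℝ → ℝ) : ℝ :=
  max (4 * M 1 (2 * M 5 0) + 2 * M 5 0) (8 * M 3 0)

set_option maxHeartbeats 1000000 in
/-- If `γ : [0,T] → X` is a continuous `(lam, eps)`-quasi-geodesic in a geodesic
metric space, `γ t` is a closest point on `γ` to `p`, and `α` is a geodesic from `p` to `γ t`,
then the concatenation `α · γ|[t,T]` is a continuous `(3 lam, eps)`-quasi-geodesic. -/
theorem statement0 {X : Type u} [MetricSpace X] (hX : GeodesicSpace X)
    (p : X) (T lam eps t : ℝ) (γ : ℝ → X)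
    (hT : 0 ≤ T) (hlam : 1 ≤ lam) (heps : 0 ≤ eps)
    (hcont : ContinuousOn γ (Icc 0 T))
    (hqg : IsQuasiGeodesicOn γ (Icc 0 T) lam eps)
    (ht : t ∈ Icc 0 T)
    (hclosest : ∀ s ∈ Icc 0 T, dist p (γ t) ≤ dist p (γ s))
    (α : ℝ → X) (hα0 : α 0 = p) (hα1 : α (dist p (γ t)) = γ t)
    (hαgeo : IsGeodesicOn α (Icc 0 (dist p (γ t)))) :
    ContinuousOn (fun u => if u ≤ dist p (γ t) then α u else γ (t + (u - dist p (γ t))))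
        (Icc 0 (dist p (γ t) + (T - t))) ∧
      IsQuasiGeodesicOn
        (fun u => if u ≤ dist p (γ t) then α u else γ (t + (u - dist p (γ t))))
        (Icc 0 (dist p (γ t) + (T - t))) (3 * lam) eps := by
  set d := dist p (γ t) with hd_def
  have hd : 0 ≤ d := dist_nonneg
  have hlam0 : (0:ℝ) < lam := lt_of_lt_of_le one_pos hlam
  obtain ⟨ht0, htT⟩ := ht
  set D := d + (T - t) with hD_def
  have hdD : d ≤ D := by simp only [hD_def]; linarith
  -- continuity of α on [0,d]
  have hα_cont : ContinuousOn α (Icc 0 d) := by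
    apply LipschitzOnWith.continuousOn (K := 1)
    apply LipschitzOnWith.of_dist_le_mul
    intro x hx y hy
    rw [hαgeo x hx y hy, Real.dist_eq, NNReal.coe_one, one_mul]
  -- continuity of shifted γ on [d, D]
  have hγ'_cont : ContinuousOn (fun u => γ (t + (u - d))) (Icc d D) := by
    apply hcont.comp (by fun_prop)
    intro x hx
    simp only [mem_Icc] at hx ⊢
    constructor <;> linarith [hx.1, hx.2]
  constructor
  · apply ContinuousOn.if
    · intro a ha
      have : a = d := by
        have := ha.2
        rw [show {a : ℝ | a ≤ d} = Iic d from rfl, frontier_Iic] at this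
        simpa using this
      subst this
      simp [hα1]
    · apply hα_cont.mono
      intro x hx
      rw [show {a : ℝ | a ≤ d} = Iic d from rfl, closure_Iic] at hx
      exact ⟨hx.1.1, hx.2⟩
    · apply hγ'_cont.mono
      intro x hx
      have h2 : x ∈ closure {a : ℝ | ¬ a ≤ d} := hx.2
      rw [show {a : ℝ | ¬ a ≤ d} = Ioi d from Set.ext fun a => not_le, closure_Ioi] at h2
      exact ⟨h2, hx.1.2⟩
  · -- quasi-geodesic property
    have key : ∀ s ∈ Icc 0 D, ∀ u ∈ Icc 0 D, s ≤ u →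
        (1 / (3 * lam)) * |s - u| -
            eps ≤ dist (if s ≤ d then α s else γ (t + (s - d)))
              (if u ≤ d then α u else γ (t + (u - d))) ∧
          dist (if s ≤ d then α s else γ (t + (s - d)))
              (if u ≤ d then α u else γ (t + (u - d))) ≤ 3 * lam * |s - u| + eps := by
      intro s hs u hu hsu
      simp only [mem_Icc] at hs hu
      have habs : |s - u| = u - s := by rw [abs_sub_comm]; exact abs_of_nonneg (by linarith)
      have h3lam : (1:ℝ) ≤ 3 * lam := by nlinarith
      have h3lam0 : (0:ℝ) < 3 * lam := by linarith
      by_cases hud : u ≤ d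
      · -- both on α
        have hsd : s ≤ d := le_trans hsu hud
        rw [if_pos hsd, if_pos hud, hαgeo s ⟨hs.1, hsd⟩ u ⟨hu.1, hud⟩, habs]
        constructor
        · have h1 : 1 / (3 * lam) ≤ 1 := by rw [div_le_one h3lam0]; linarith
          nlinarith
        · nlinarith
      · push_neg at hud
        have hγu : t + (u - d) ∈ Icc 0 T := ⟨by linarith, by linarith [hu.2]⟩
        by_cases hsd : s ≤ d
        · -- mixed case
          rw [if_pos hsd, if_neg (not_le.mpr hud)]
          set A := d - s with hA
          set B := u - d with hB
          have hA0 : 0 ≤ A := by linarith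
          have hB0 : 0 ≤ B := by linarith
          set q := γ (t + (u - d)) with hq
          set D0 := dist (α s) q with hD0
          have hD0nn : 0 ≤ D0 := dist_nonneg
          have hαs : s ∈ Icc 0 d := ⟨hs.1, hsd⟩
          have hαd : d ∈ Icc 0 d := ⟨hd, le_refl d⟩
          have hdist_sd : dist (α s) (γ t) = A := by
            rw [← hα1, hαgeo s hαs d hαd, abs_of_nonpos (by linarith)]; ring
          have hdist_ps : dist p (α s) = s := by
            rw [← hα0, hαgeo 0 ⟨le_refl 0, hd⟩ s hαs, abs_of_nonpos (by linarith)]; ring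
          have hγtq := hqg t ⟨ht0, htT⟩ (t + (u - d)) hγu
          have harg : |t - (t + (u - d))| = B := by
            rw [abs_sub_comm]
            rw [show t + (u - d) - t = B by ring, abs_of_nonneg hB0]
          rw [harg] at hγtq
          -- lower bounds on D0
          have hlow1 : A ≤ D0 := by
            have h1 : d ≤ dist p q := hclosest _ hγu
            have h2 : dist p q ≤ dist p (α s) + D0 := dist_triangle p (α s) q
            rw [hdist_ps] at h2
            linarith
          have hlow2 : dist (γ t) q ≤ A + D0 := by
            calc dist (γ t) q ≤ dist (γ t) (α s) + D0 := dist_triangle _ _ _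
              _ = A + D0 := by rw [dist_comm, hdist_sd]
          have hBbound : B ≤ lam * (2 * D0 + eps) := by
            have h1 : (1 / lam) * B - eps ≤ A + D0 := le_trans hγtq.1 hlow2
            have h2 : (1 / lam) * B ≤ 2 * D0 + eps := by linarith
            rw [div_mul_eq_mul_div, one_mul, div_le_iff₀ hlam0] at h2
            nlinarith
          constructor
          · rw [habs, show u - s = A + B by ring]
            rw [div_mul_eq_mul_div, one_mul, sub_le_iff_le_add, div_le_iff₀ h3lam0]
            nlinarith [mul_nonneg (sub_nonneg.mpr hlam) hD0nn, mul_nonneg hlam0.le heps]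
          · rw [habs, show u - s = A + B by ring]
            have hup : D0 ≤ A + (lam * B + eps) := by
              calc D0 ≤ dist (α s) (γ t) + dist (γ t) q := dist_triangle _ _ _
                _ ≤ A + (lam * B + eps) := by rw [hdist_sd]; linarith [hγtq.2]
            nlinarith [mul_nonneg (sub_nonneg.mpr hlam) hA0, mul_nonneg hlam0.le hB0]
        · -- both on γ
          push_neg at hsd
          have hγs : t + (s - d) ∈ Icc 0 T := ⟨by linarith, by linarith [hu.2]⟩
          rw [if_neg (not_le.mpr hsd), if_neg (not_le.mpr hud)]
          have h := hqg _ hγs _ hγu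
          have harg : |t + (s - d) - (t + (u - d))| = |s - u| := by
            congr 1; ring
          rw [harg] at h
          constructor
          · refine le_trans ?_ h.1
            have : 1 / (3 * lam) ≤ 1 / lam := by
              apply one_div_le_one_div_of_le hlam0; linarith
            nlinarith [abs_nonneg (s - u)]
          · refine le_trans h.2 ?_
            nlinarith [abs_nonneg (s - u), mul_nonneg hlam0.le (abs_nonneg (s - u))]
    intro s hs u hu
    rcases le_total s u with h | h
    · exact key s hs u hu h
    · obtain ⟨h1, h2⟩ := key u hu s hs h
      rw [dist_comm, abs_sub_comm] at h1 h2
      exact ⟨h1, h2⟩
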